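/- For irrational α ∈ (0,1), any word v : ℤ → {0,1} at balance distance at most 1 from the Sturmian word s_{0,α} (a quasi-Sturmian word of slope α) is non-periodic: there is no T ≥ 1 with v(n+T) = v(n) for all n ∈ ℤ. -/

import Mathlib

/-- The Sturmian word of intercept `ρ` and slope `α`: letter `0` iff `(ρ + nα) mod 1 ∈ [0, 1-α)`. -/
noncomputable def sturm (ρ α : ℝ) (n : ℤ) : Fin 2 :=
  if Int.fract (ρ + n * α) < 1 - α then 0 else 1

/-- Number of occurrences of the letter `0` in `u(p)…u(q)`. -/
noncomputable def zeroCount (u : ℤ → Fin 2) (p q : ℤ) : ℤ :=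
  (((Finset.Icc p q).filter (fun i => u i = 0)).card : ℤ)

/-- The balance distance between `u` and `v` is at most one. -/
def distLE1 (u v : ℤ → Fin 2) : Prop :=
  ∀ p q : ℤ, p ≤ q → |zeroCount u p q - zeroCount v p q| ≤ 1

lemma floor_add_small (x a : ℝ) (h0 : 0 < a) (h1 : a < 1) :
    ⌊x + a⌋ = ⌊x⌋ + if Int.fract x < 1 - a then 0 else 1 := by
  conv_lhs => rw [← Int.floor_add_fract x]
  rw [add_assoc, Int.floor_intCast_add]
  congr 1
  have h1' := Int.fract_nonneg x
  have h2' := Int.fract_lt_one x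
  split_ifs with h
  · rw [Int.floor_eq_iff] <;> push_cast <;> constructor <;> linarith
  · rw [Int.floor_eq_iff] <;> push_cast <;> constructor <;> linarith [not_lt.1 h]

lemma zeroCount_succ (u : ℤ → Fin 2) (p q : ℤ) (h : p ≤ q + 1) :
    zeroCount u p (q+1) = zeroCount u p q + if u (q+1) = 0 then 1 else 0 := by
  unfold zeroCount
  rw [show Finset.Icc p (q+1) = insert (q+1) (Finset.Icc p q) by
    ext x; simp only [Finset.mem_Icc, Finset.mem_insert]; omega]
  rw [Finset.filter_insert]
  have hnot : (q+1) ∉ (Finset.Icc p q).filter (fun i => u i = 0) := by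
    intro hmem
    exact absurd (Finset.mem_Icc.1 (Finset.mem_filter.1 hmem).1).2 (by omega)
  split_ifs with h'
  · rw [Finset.card_insert_of_notMem hnot]; push_cast; ring
  · ring

lemma zeroCount_split (u : ℤ → Fin 2) (p r q : ℤ) (h1 : p ≤ r + 1) (h2 : r ≤ q) :
    zeroCount u p q = zeroCount u p r + zeroCount u (r+1) q := by
  unfold zeroCount
  have hU : Finset.Icc p q = Finset.Icc p r ∪ Finset.Icc (r+1) q := by
    ext x; simp only [Finset.mem_Icc, Finset.mem_union]; omega
  have hdisj : Disjoint ((Finset.Icc p r).filter (fun i => u i = 0))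
      ((Finset.Icc (r+1) q).filter (fun i => u i = 0)) := by
    apply Finset.disjoint_filter_filter
    rw [Finset.disjoint_left]
    intro x hx hx'
    simp only [Finset.mem_Icc] at hx hx'
    omega
  rw [hU, Finset.filter_union, Finset.card_union_of_disjoint hdisj, Nat.cast_add]

lemma zeroCount_shift (u : ℤ → Fin 2) (S : ℤ) (h : ∀ n, u (n + S) = u n) (p q : ℤ) :
    zeroCount u (p + S) (q + S) = zeroCount u p q := by
  unfold zeroCount
  congr 1
  have : ((Finset.Icc (p+S) (q+S)).filter (fun i => u i = 0)) =
      ((Finset.Icc p q).filter (fun i => u i = 0)).image (· + S) := by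
    ext x
    simp only [Finset.mem_filter, Finset.mem_Icc, Finset.mem_image]
    constructor
    · rintro ⟨⟨hx1, hx2⟩, hx3⟩
      refine ⟨x - S, ⟨⟨by omega, by omega⟩, ?_⟩, by omega⟩
      rw [← h (x - S)]; simpa using hx3
    · rintro ⟨a, ⟨⟨ha1, ha2⟩, ha3⟩, rfl⟩
      exact ⟨⟨by omega, by omega⟩, by rw [h a]; exact ha3⟩
  rw [this, Finset.card_image_of_injective _ (add_left_injective S)]

lemma sturm_count (α : ℝ) (h0 : 0 < α) (h1 : α < 1) :
    ∀ M : ℤ, 0 ≤ M → zeroCount (sturm 0 α) 0 M = (M + 1) - ⌊((M : ℝ) + 1) * α⌋ := by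
  refine Int.le_induction ?_ ?_
  · have hs : sturm 0 α 0 = 0 := by
      have hcond : Int.fract ((0:ℝ) + ((0:ℤ):ℝ) * α) < 1 - α := by
        norm_num [Int.fract_zero]
        linarith
      simp only [sturm, if_pos hcond]
    have hfl : ⌊(((0:ℤ):ℝ) + 1) * α⌋ = 0 := by
      rw [Int.floor_eq_zero_iff]
      constructor <;> push_cast <;> norm_num <;> linarith
    unfold zeroCount
    rw [Finset.Icc_self, Finset.filter_singleton, if_pos hs, hfl]
    simp
  · intro n hn ih
    rw [zeroCount_succ _ _ _ (by omega), ih]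
    have hst : sturm 0 α (n+1) = if Int.fract (((n:ℝ)+1)*α) < 1 - α then 0 else 1 := by
      unfold sturm
      push_cast
      ring_nf
    have hf : (⌊((n:ℝ)+1+1)*α⌋ : ℤ) = ⌊((n:ℝ)+1)*α⌋
        + if Int.fract (((n:ℝ)+1)*α) < 1 - α then (0:ℤ) else 1 := by
      rw [show ((n:ℝ)+1+1)*α = ((n:ℝ)+1)*α + α by ring, floor_add_small _ _ h0 h1]
    push_cast
    rw [hst, hf]
    by_cases hcond : Int.fract (((n:ℝ)+1)*α) < 1 - α
    · rw [if_pos hcond, if_pos hcond, if_pos rfl]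
      push_cast; ring
    · rw [if_neg hcond, if_neg hcond, if_neg (by decide : ¬(1:Fin 2) = 0)]
      push_cast; ring

/-- Any quasi-Sturmian word of irrational slope `α` is non-periodic. -/
theorem quasiSturmian_not_periodic (α : ℝ) (hirr : Irrational α)
    (hα : α ∈ Set.Ioo (0:ℝ) 1) (v : ℤ → Fin 2) (hv : distLE1 v (sturm 0 α)) :
    ¬ ∃ T : ℤ, 1 ≤ T ∧ ∀ n : ℤ, v (n + T) = v n := by
  rintro ⟨T, hT, hper⟩
  obtain ⟨h0, h1⟩ := hα
  set c := zeroCount v 0 (T-1) with hc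
  have hperk : ∀ (k : ℕ) (n : ℤ), v (n + k * T) = v n := by
    intro k
    induction k with
    | zero => simp
    | succ k ih =>
      intro n
      push_cast
      rw [show n + ((k:ℤ)+1)*T = (n + (k:ℤ)*T) + T by ring, hper, ih]
  have hcount : ∀ N : ℕ, zeroCount v 0 (((N:ℤ)+1) * T - 1) = ((N:ℤ)+1) * c := by
    intro N
    induction N with
    | zero => simp [hc]
    | succ N ih =>
      have hTpos : (0:ℤ) < ((N:ℤ)+1)*T := by positivity
      have hsplit := zeroCount_split v 0 (((N:ℤ)+1)*T - 1) (((N:ℤ)+2)*T - 1)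
        (by omega) (by nlinarith)
      have hsh := zeroCount_shift v (((N:ℤ)+1)*T)
        (fun n => by have := hperk (N+1) n; push_cast at this; exact this) 0 (T-1)
      push_cast
      rw [show ((N:ℤ)+1+1)*T - 1 = ((N:ℤ)+2)*T - 1 by ring, hsplit, ih]
      rw [show ((N:ℤ)+1)*T - 1 + 1 = 0 + ((N:ℤ)+1)*T by ring,
        show ((N:ℤ)+2)*T - 1 = (T-1) + ((N:ℤ)+1)*T by ring, hsh]
      ring
  have hsturm : ∀ N : ℕ, zeroCount (sturm 0 α) 0 (((N:ℤ)+1)*T - 1)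
      = ((N:ℤ)+1)*T - ⌊(((N:ℝ)+1)*(T:ℝ))*α⌋ := by
    intro N
    have hTpos : (0:ℤ) < ((N:ℤ)+1)*T := by positivity
    have hM := sturm_count α h0 h1 (((N:ℤ)+1)*T - 1) (by omega)
    rw [hM]
    congr 1
    · ring
    · congr 1
      push_cast
      ring
  -- combine
  have hcomb : ∀ N : ℕ, |((N:ℤ)+1)*c - (((N:ℤ)+1)*T - ⌊(((N:ℝ)+1)*(T:ℝ))*α⌋)| ≤ 1 := by
    intro N
    have hTpos : (0:ℤ) < ((N:ℤ)+1)*T := by positivity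
    have := hv 0 (((N:ℤ)+1)*T - 1) (by omega)
    rwa [hcount N, hsturm N] at this
  set β := (T:ℝ) * α with hβdef
  have hβ : Irrational β := hirr.intCast_mul (by omega)
  set δ := (T:ℝ) - (c:ℝ) - β with hδdef
  have hδ : δ ≠ 0 := by
    intro h
    apply hβ.ne_int (T - c)
    push_cast
    linarith
  have hδpos : 0 < |δ| := abs_pos.2 hδ
  obtain ⟨n, hn⟩ := exists_nat_gt (2 / |δ|)
  -- cast the combined bound for this n to ℝ
  have h2 := hcomb n
  have h2' : |((n:ℝ)+1)*(c:ℝ) - (((n:ℝ)+1)*(T:ℝ) - (⌊(((n:ℝ)+1)*(T:ℝ))*α⌋ : ℝ))| ≤ 1 := by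
    have h3 : ((|((n:ℤ)+1)*c - (((n:ℤ)+1)*T - ⌊(((n:ℝ)+1)*(T:ℝ))*α⌋)| : ℤ) : ℝ) ≤ 1 := by
      exact_mod_cast h2
    push_cast at h3
    convert h3 using 2
  set x := (((n:ℝ)+1)*(T:ℝ))*α with hxdef
  have hfr1 := Int.fract_nonneg x
  have hfr2 := Int.fract_lt_one x
  have hfloor : (⌊x⌋ : ℝ) = x - Int.fract x := (Int.self_sub_fract x).symm
  have hx : x = ((n:ℝ)+1) * β := by rw [hxdef, hβdef]; ring
  have hkey : |((n:ℝ)+1)*δ + Int.fract x| ≤ 1 := by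
    have : ((n:ℝ)+1)*(c:ℝ) - (((n:ℝ)+1)*(T:ℝ) - (⌊x⌋ : ℝ))
        = -(((n:ℝ)+1)*δ + Int.fract x) := by
      rw [hfloor, hx, hδdef]; ring
    rw [this, abs_neg] at h2'
    exact h2'
  have habs : ((n:ℝ)+1)*|δ| = |((n:ℝ)+1)*δ| := by
    rw [abs_mul, abs_of_nonneg (by positivity : (0:ℝ) ≤ (n:ℝ)+1)]
  have hlt2 : ((n:ℝ)+1)*|δ| < 2 := by
    rw [habs]
    calc |((n:ℝ)+1)*δ|
        = |(((n:ℝ)+1)*δ + Int.fract x) + (-(Int.fract x))| := by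
          rw [add_neg_cancel_right]
      _ ≤ |((n:ℝ)+1)*δ + Int.fract x| + |(-(Int.fract x))| := abs_add_le _ _
      _ < 2 := by
          rw [abs_neg, abs_of_nonneg hfr1]
          linarith
  have hgt : 2 < (n:ℝ)*|δ| := by
    rw [div_lt_iff₀ hδpos] at hn
    linarith
  nlinarith [hδpos.le, hlt2, hgt]
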